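/- There is no finite subset F of A such that the family {D^a(f) : f ∈ F, a ≥ 0} spans the subspace span_ℂ{P_{n,m} : m ≥ n ≥ 0} of A. -/

import Mathlib

open MvPolynomial

noncomputable section

/-- The polynomial ring `A = ℂ[x₁, x₂, x₃, …]`, with variables indexed by
the positive integers (`X k` is the variable `x_k`). -/
abbrev A : Type := MvPolynomial ℕ+ ℂ

/-- The elementary Schur polynomials `S_k`, defined by the generating identity
`∑_{k≥0} S_k z^k = exp(∑_{n≥1} (x_n/(2n)) z^n)`; equivalently, `S_0 = 1` and
`(k+1) S_{k+1} = ∑_{j=0}^{k} (x_{k+1-j}/2) S_j` (obtained by differentiating in `z`). -/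
noncomputable def S : ℕ → A
  | 0 => 1
  | (k+1) =>
      ((k : ℂ) + 1)⁻¹ • ∑ j ∈ (Finset.range (k+1)).attach,
        (MvPolynomial.C (2⁻¹ : ℂ) * MvPolynomial.X ((k - j.1).succPNat)) * S j.1
  termination_by k => k
  decreasing_by
    have := j.2; simp only [Finset.mem_range] at this; omega

/-- The generalized binomial coefficient `C(1/2, k) = (1/2)(1/2−1)⋯(1/2−k+1)/k!`. -/
noncomputable def halfChoose (k : ℕ) : ℂ :=
  (∏ i ∈ Finset.range k, ((2⁻¹ : ℂ) - (i : ℂ))) / (k.factorial : ℂ)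

/-- `P_{n,m} = ∑_{k=0}^{n} (−1)^k C(1/2,k) S_{m+k} S_{n−k}`. -/
noncomputable def P (n m : ℕ) : A :=
  ∑ k ∈ Finset.range (n+1), ((-1 : ℂ)^k * halfChoose k) • (S (m+k) * S (n-k))

/-- The extremal vectors `φ_n = P_{n,n}`. -/
noncomputable def phi (n : ℕ) : A := P n n

/-- The translation operator `D(p) = x₁·p + ∑_{n≥1} n·x_{n+1}·∂p/∂x_n`
(the sum is finite on each polynomial: only the variables occurring in `p` contribute,
since `∂p/∂x_n = 0` for `n ∉ p.vars`). -/
noncomputable def D (p : A) : A :=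
  MvPolynomial.X 1 * p +
    ∑ n ∈ p.vars, ((n : ℕ) : ℂ) • (MvPolynomial.X (n + 1) * MvPolynomial.pderiv n p)

end

noncomputable section
open Finset

def e (a : ℕ+) : ℕ+ →₀ ℕ := Finsupp.single a 1

lemma S_succ (k : ℕ) : S (k+1) = ((k : ℂ) + 1)⁻¹ •
    ∑ j ∈ Finset.range (k+1), (MvPolynomial.C (2⁻¹ : ℂ) * MvPolynomial.X ((k - j).succPNat)) * S j := by
  rw [S]
  congr 1
  exact Finset.sum_attach (Finset.range (k+1)) (fun j => (MvPolynomial.C (2⁻¹ : ℂ) * MvPolynomial.X ((k - j).succPNat)) * S j)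

lemma c0_S (k : ℕ) : MvPolynomial.coeff 0 (S k) = if k = 0 then 1 else 0 := by
  cases k with
  | zero => simp [S]
  | succ t =>
    rw [S_succ, MvPolynomial.coeff_smul, MvPolynomial.coeff_sum]
    simp only [Nat.succ_ne_zero, if_false]
    rw [Finset.sum_eq_zero, smul_zero]
    intro j hj
    rw [mul_assoc, MvPolynomial.coeff_C_mul, MvPolynomial.coeff_X_mul']
    simp

lemma e_ne_zero (a : ℕ+) : e a ≠ 0 := by
  simp [e, Finsupp.single_eq_zero]

lemma succPNat_eq_iff (t : ℕ) (a : ℕ+) (j : ℕ) (hj : j ≤ t) :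
    ((t - j).succPNat = a ∧ j = 0) ↔ ((a:ℕ) = t + 1 ∧ j = 0) := by
  constructor
  · rintro ⟨h, rfl⟩
    refine ⟨?_, rfl⟩
    rw [← h]; simp [Nat.succPNat]
  · rintro ⟨h, rfl⟩
    refine ⟨?_, rfl⟩
    apply PNat.coe_injective
    simp [Nat.succPNat, ← h]

lemma cL_S (a : ℕ+) (k : ℕ) :
    MvPolynomial.coeff (e a) (S k) = if (a:ℕ) = k then ((2:ℂ)*(k:ℕ))⁻¹ else 0 := by
  cases k with
  | zero =>
    have : (a:ℕ) ≠ 0 := a.pos.ne'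
    simp [S, MvPolynomial.coeff_one, (e_ne_zero a).symm, this]
  | succ t =>
    rw [S_succ, MvPolynomial.coeff_smul, MvPolynomial.coeff_sum]
    have key : ∀ j ∈ Finset.range (t+1),
        MvPolynomial.coeff (e a) ((MvPolynomial.C (2⁻¹:ℂ) * MvPolynomial.X ((t - j).succPNat)) * S j)
        = if j = 0 ∧ (a:ℕ) = t+1 then (2⁻¹:ℂ) else 0 := by
      intro j hj
      rw [mul_assoc, MvPolynomial.coeff_C_mul, MvPolynomial.coeff_X_mul']
      have hsupp : (e a).support = {a} := Finsupp.support_single_ne_zero _ one_ne_zero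
      rw [hsupp]
      simp only [Finset.mem_singleton]
      by_cases h : (t - j).succPNat = a
      · subst h
        rw [if_pos rfl]
        have : e ((t-j).succPNat) - Finsupp.single ((t-j).succPNat) 1 = 0 := by simp [e]
        rw [this, c0_S]
        rw [Finset.mem_range] at hj
        have := succPNat_eq_iff t ((t-j).succPNat) j (by omega)
        by_cases hj0 : j = 0
        · subst hj0
          have ha : ((((t:ℕ)-0).succPNat : ℕ+) :ℕ) = t+1 := by simp [Nat.succPNat]
          simp [ha]
        · simp [hj0]
      · rw [if_neg h]
        have : ¬ (j = 0 ∧ (a:ℕ) = t+1) := by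
          rintro ⟨rfl, ha⟩
          apply h
          apply PNat.coe_injective
          simp [Nat.succPNat, ha]
        rw [if_neg this, mul_zero]
    rw [Finset.sum_congr rfl key]
    simp only [ite_and]
    rw [Finset.sum_ite_eq' (Finset.range (t+1)) 0 (fun _ => if (a:ℕ) = t+1 then (2⁻¹:ℂ) else 0)]
    simp only [Finset.mem_range, Nat.succ_pos, if_true]
    by_cases ha : (a:ℕ) = t+1
    · simp only [ha, if_true, smul_eq_mul]
      push_cast
      rw [mul_inv]
      ring
    · simp [ha]

lemma support_e_add (i j : ℕ+) (hij : i ≠ j) : (e i + e j).support = {i, j} := by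
  rw [Finsupp.support_add_eq]
  · simp [e, Finsupp.support_single_ne_zero _ one_ne_zero]
  · simp only [e, Finsupp.support_single_ne_zero _ one_ne_zero]
    simp only [Finset.disjoint_singleton]
    exact fun h => hij h

lemma e_add_sub_left (i j : ℕ+) : e i + e j - Finsupp.single i 1 = e j := by
  show e i + e j - e i = e j
  rw [add_comm]; exact add_tsub_cancel_right _ _

lemma e_add_sub_right (i j : ℕ+) : e i + e j - Finsupp.single j 1 = e i :=
  add_tsub_cancel_right _ _

lemma cQ_S (i j : ℕ+) (hij : i ≠ j) (k : ℕ) :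
    MvPolynomial.coeff (e i + e j) (S k)
      = if (i:ℕ) + (j:ℕ) = k then ((4:ℂ)*(i:ℕ)*(j:ℕ))⁻¹ else 0 := by
  cases k with
  | zero =>
    have h1 : e i + e j ≠ 0 := by
      intro h
      have := DFunLike.congr_fun h i
      simp [e, Finsupp.single_apply, hij] at this
    have h2 : (i:ℕ) + (j:ℕ) ≠ 0 := by
      have := i.pos; omega
    simp [S, MvPolynomial.coeff_one, h1.symm, h2, Ne.symm h1]
  | succ t =>
    rw [S_succ, MvPolynomial.coeff_smul, MvPolynomial.coeff_sum]
    have key : ∀ q ∈ Finset.range (t+1),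
        MvPolynomial.coeff (e i + e j) ((MvPolynomial.C (2⁻¹:ℂ) * MvPolynomial.X ((t - q).succPNat)) * S q)
        = (if q = (j:ℕ) ∧ (i:ℕ)+(j:ℕ) = t+1 then (2⁻¹:ℂ) * ((2:ℂ)*(j:ℕ))⁻¹ else 0)
          + (if q = (i:ℕ) ∧ (i:ℕ)+(j:ℕ) = t+1 then (2⁻¹:ℂ) * ((2:ℂ)*(i:ℕ))⁻¹ else 0) := by
      intro q hq
      rw [Finset.mem_range] at hq
      have hijn : (i:ℕ) ≠ (j:ℕ) := fun h => hij (PNat.coe_injective h)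
      rw [mul_assoc, MvPolynomial.coeff_C_mul, MvPolynomial.coeff_X_mul']
      rw [support_e_add i j hij]
      simp only [Finset.mem_insert, Finset.mem_singleton]
      have hb : ((t - q).succPNat : ℕ) = t - q + 1 := rfl
      by_cases h1 : (t - q).succPNat = i
      · have hi : (i:ℕ) = t - q + 1 := by rw [← h1]; exact hb
        rw [if_pos (Or.inl h1), h1, e_add_sub_left, cL_S]
        have hne2 : ¬ (q = (i:ℕ) ∧ (i:ℕ)+(j:ℕ) = t+1) := by
          rintro ⟨rfl, hs⟩; omega
        rw [if_neg hne2, add_zero]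
        by_cases h2 : (j:ℕ) = q
        · have hcond : q = (j:ℕ) ∧ (i:ℕ)+(j:ℕ) = t+1 := by
            constructor; omega; omega
          rw [if_pos h2, if_pos hcond, ← h2]
        · rw [if_neg h2, mul_zero, if_neg (by rintro ⟨rfl, hs⟩; omega)]
      · by_cases h2 : (t - q).succPNat = j
        · have hjv : (j:ℕ) = t - q + 1 := by rw [← h2]; exact hb
          rw [if_pos (Or.inr h2), h2, e_add_sub_right, cL_S]
          have hne1 : ¬ (q = (j:ℕ) ∧ (i:ℕ)+(j:ℕ) = t+1) := by
            rintro ⟨rfl, hs⟩; omega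
          rw [if_neg hne1, zero_add]
          by_cases h3 : (i:ℕ) = q
          · have hcond : q = (i:ℕ) ∧ (i:ℕ)+(j:ℕ) = t+1 := by
              constructor; omega; omega
            rw [if_pos h3, if_pos hcond, ← h3]
          · rw [if_neg h3, mul_zero, if_neg (by rintro ⟨rfl, hs⟩; omega)]
        · rw [if_neg (by tauto), mul_zero]
          have hi1 : ¬ (q = (j:ℕ) ∧ (i:ℕ)+(j:ℕ) = t+1) := by
            rintro ⟨rfl, hs⟩
            apply h1
            apply PNat.coe_injective
            rw [hb]; omega
          have hi2 : ¬ (q = (i:ℕ) ∧ (i:ℕ)+(j:ℕ) = t+1) := by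
            rintro ⟨rfl, hs⟩
            apply h2
            apply PNat.coe_injective
            rw [hb]; omega
          rw [if_neg hi1, if_neg hi2, add_zero]
    rw [Finset.sum_congr rfl key, Finset.sum_add_distrib]
    simp only [ite_and]
    rw [Finset.sum_ite_eq' (Finset.range (t+1)) ((j:ℕ)) (fun _ => if (i:ℕ)+(j:ℕ) = t+1 then (2⁻¹:ℂ) * ((2:ℂ)*(j:ℕ))⁻¹ else 0)]
    rw [Finset.sum_ite_eq' (Finset.range (t+1)) ((i:ℕ)) (fun _ => if (i:ℕ)+(j:ℕ) = t+1 then (2⁻¹:ℂ) * ((2:ℂ)*(i:ℕ))⁻¹ else 0)]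
    by_cases hs : (i:ℕ)+(j:ℕ) = t+1
    · have hipos := i.pos
      have hjpos := j.pos
      have hjm : (j:ℕ) ∈ Finset.range (t+1) := by rw [Finset.mem_range]; omega
      have him : (i:ℕ) ∈ Finset.range (t+1) := by rw [Finset.mem_range]; omega
      rw [if_pos hjm, if_pos him, if_pos hs, if_pos hs, if_pos hs]
      have hI : ((i:ℕ):ℂ) ≠ 0 := Nat.cast_ne_zero.mpr (by omega)
      have hJ : ((j:ℕ):ℂ) ≠ 0 := Nat.cast_ne_zero.mpr (by omega)
      have hT : ((t:ℂ)+1) ≠ 0 := by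
        have : ((t+1:ℕ):ℂ) ≠ 0 := Nat.cast_ne_zero.mpr (by omega)
        push_cast at this; exact this
      have hsum : ((i:ℕ):ℂ) + ((j:ℕ):ℂ) = (t:ℂ)+1 := by
        exact_mod_cast congrArg (fun n : ℕ => (n:ℂ)) hs
      rw [smul_eq_mul, ← hsum]
      have hIJ : ((i:ℕ):ℂ) + ((j:ℕ):ℂ) ≠ 0 := by rw [hsum]; exact hT
      rw [show ((2⁻¹:ℂ)*(2*((j:ℕ):ℂ))⁻¹ + (2⁻¹:ℂ)*(2*((i:ℕ):ℂ))⁻¹)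
            = (((i:ℕ):ℂ) + ((j:ℕ):ℂ)) * ((4:ℂ)*((i:ℕ):ℂ)*((j:ℕ):ℂ))⁻¹ from by
          field_simp; ring]
      rw [← mul_assoc, inv_mul_cancel₀ hIJ, one_mul]
    · simp [hs]

lemma c0_mul (p q : A) :
    MvPolynomial.coeff 0 (p * q) = MvPolynomial.coeff 0 p * MvPolynomial.coeff 0 q := by
  simp [MvPolynomial.coeff_mul]

lemma e_apply_self (a : ℕ+) : e a a = 1 := by simp [e]

lemma e_apply_ne {a b : ℕ+} (h : b ≠ a) : e a b = 0 := by
  simp [e, Finsupp.single_apply_eq_zero]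
  intro hh; exact absurd hh h

lemma antidiagonal_e (a : ℕ+) :
    Finset.HasAntidiagonal.antidiagonal (e a) = {((0 : ℕ+ →₀ ℕ), e a), (e a, 0)} := by
  ext x
  rw [Finset.HasAntidiagonal.mem_antidiagonal]
  constructor
  · intro h
    have ha := DFunLike.congr_fun h a
    simp only [Finsupp.add_apply, e_apply_self] at ha
    have hk : ∀ k, k ≠ a → x.1 k = 0 ∧ x.2 k = 0 := by
      intro k hk
      have := DFunLike.congr_fun h k
      simp only [Finsupp.add_apply, e_apply_ne hk] at this
      omega
    simp only [Finset.mem_insert, Finset.mem_singleton]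
    rcases Nat.le_one_iff_eq_zero_or_eq_one.mp (by omega : x.1 a ≤ 1) with h1 | h1
    · left
      have hx1 : x.1 = 0 := by
        ext k; by_cases hka : k = a
        · subst hka; simpa using h1
        · simpa using (hk k hka).1
      have hx2 : x.2 = e a := by
        ext k; by_cases hka : k = a
        · subst hka; rw [e_apply_self]; omega
        · rw [(hk k hka).2, e_apply_ne hka]
      exact Prod.ext_iff.mpr ⟨hx1, hx2⟩
    · right
      have hx1 : x.1 = e a := by
        ext k; by_cases hka : k = a
        · subst hka; rw [h1, e_apply_self]
        · rw [(hk k hka).1, e_apply_ne hka]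
      have hx2 : x.2 = 0 := by
        ext k; by_cases hka : k = a
        · subst hka; simp only [Finsupp.coe_zero, Pi.zero_apply]; omega
        · simpa using (hk k hka).2
      exact Prod.ext_iff.mpr ⟨hx1, hx2⟩
  · intro h
    simp only [Finset.mem_insert, Finset.mem_singleton] at h
    rcases h with h | h <;> rw [Prod.ext_iff] at h <;> rcases h with ⟨h1, h2⟩ <;>
      rw [h1, h2] <;> simp

lemma cL_mul (a : ℕ+) (p q : A) :
    MvPolynomial.coeff (e a) (p * q) =
      MvPolynomial.coeff 0 p * MvPolynomial.coeff (e a) q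
        + MvPolynomial.coeff (e a) p * MvPolynomial.coeff 0 q := by
  rw [MvPolynomial.coeff_mul, antidiagonal_e]
  rw [Finset.sum_insert (by simp [Prod.ext_iff, (e_ne_zero a).symm]), Finset.sum_singleton]

lemma e_ne_e {i j : ℕ+} (hij : i ≠ j) : e i ≠ e j := by
  intro h
  have := DFunLike.congr_fun h i
  rw [e_apply_self, e_apply_ne hij] at this
  exact one_ne_zero this

lemma e_ne_add {i j : ℕ+} (hij : i ≠ j) : e i ≠ e i + e j := by
  intro h
  have := DFunLike.congr_fun h j
  simp only [Finsupp.add_apply, e_apply_self, e_apply_ne (Ne.symm hij)] at this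
  omega

lemma zero_ne_add {i j : ℕ+} (hij : i ≠ j) : (0 : ℕ+ →₀ ℕ) ≠ e i + e j := by
  intro h
  have := DFunLike.congr_fun h i
  simp [Finsupp.add_apply, e_apply_self, e_apply_ne hij] at this

lemma finsupp_eq_pair (i j : ℕ+) (hij : i ≠ j) (y : ℕ+ →₀ ℕ)
    (h0 : ∀ k, k ≠ i → k ≠ j → y k = 0) :
    y = Finsupp.single i (y i) + Finsupp.single j (y j) := by
  ext k
  rw [Finsupp.add_apply, Finsupp.single_apply, Finsupp.single_apply]
  by_cases hki : i = k
  · have hjk : ¬ j = k := fun h => hij (hki.trans h.symm)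
    rw [if_pos hki, if_neg hjk, add_zero, hki]
  · by_cases hkj : j = k
    · rw [if_neg hki, if_pos hkj, zero_add, hkj]
    · rw [if_neg hki, if_neg hkj, h0 k (fun h => hki h.symm) (fun h => hkj h.symm), add_zero]

lemma antidiagonal_ee (i j : ℕ+) (hij : i ≠ j) :
    Finset.HasAntidiagonal.antidiagonal (e i + e j) =
      {((0 : ℕ+ →₀ ℕ), e i + e j), (e i, e j), (e j, e i), (e i + e j, 0)} := by
  ext x
  rw [Finset.HasAntidiagonal.mem_antidiagonal]
  constructor
  · intro h
    have hi := DFunLike.congr_fun h i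
    have hj := DFunLike.congr_fun h j
    simp only [Finsupp.add_apply, e_apply_self, e_apply_ne hij, e_apply_ne (Ne.symm hij)] at hi hj
    have hk : ∀ k, k ≠ i → k ≠ j → x.1 k = 0 ∧ x.2 k = 0 := by
      intro k hki hkj
      have := DFunLike.congr_fun h k
      simp only [Finsupp.add_apply, e_apply_ne hki, e_apply_ne hkj] at this
      omega
    have E1 := finsupp_eq_pair i j hij x.1 (fun k h1 h2 => (hk k h1 h2).1)
    have E2 := finsupp_eq_pair i j hij x.2 (fun k h1 h2 => (hk k h1 h2).2)
    simp only [Finset.mem_insert, Finset.mem_singleton]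
    rcases Nat.le_one_iff_eq_zero_or_eq_one.mp (by omega : x.1 i ≤ 1) with h1 | h1 <;>
      rcases Nat.le_one_iff_eq_zero_or_eq_one.mp (by omega : x.1 j ≤ 1) with h2 | h2
    · left
      refine Prod.ext_iff.mpr ⟨?_, ?_⟩
      · rw [E1, h1, h2]; simp
      · rw [E2, show x.2 i = 1 by omega, show x.2 j = 1 by omega]; rfl
    · right; right; left
      refine Prod.ext_iff.mpr ⟨?_, ?_⟩
      · rw [E1, h1, h2]; simp [e]
      · rw [E2, show x.2 i = 1 by omega, show x.2 j = 0 by omega]; simp [e]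
    · right; left
      refine Prod.ext_iff.mpr ⟨?_, ?_⟩
      · rw [E1, h1, h2]; simp [e]
      · rw [E2, show x.2 i = 0 by omega, show x.2 j = 1 by omega]; simp [e]
    · right; right; right
      refine Prod.ext_iff.mpr ⟨?_, ?_⟩
      · rw [E1, h1, h2]; rfl
      · rw [E2, show x.2 i = 0 by omega, show x.2 j = 0 by omega]; simp
  · intro h
    simp only [Finset.mem_insert, Finset.mem_singleton] at h
    rcases h with h | h | h | h <;> rw [Prod.ext_iff] at h <;> rcases h with ⟨h1, h2⟩ <;>
      rw [h1, h2] <;> simp [add_comm]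

lemma cQ_mul (i j : ℕ+) (hij : i ≠ j) (p q : A) :
    MvPolynomial.coeff (e i + e j) (p * q) =
      MvPolynomial.coeff 0 p * MvPolynomial.coeff (e i + e j) q
        + MvPolynomial.coeff (e i) p * MvPolynomial.coeff (e j) q
        + MvPolynomial.coeff (e j) p * MvPolynomial.coeff (e i) q
        + MvPolynomial.coeff (e i + e j) p * MvPolynomial.coeff 0 q := by
  rw [MvPolynomial.coeff_mul, antidiagonal_ee i j hij]
  rw [Finset.sum_insert, Finset.sum_insert, Finset.sum_insert, Finset.sum_singleton]
  · ring
  · intro hcon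
    simp only [Finset.mem_singleton, Prod.ext_iff] at hcon
    obtain ⟨hc, -⟩ := hcon
    rw [add_comm] at hc
    exact (e_ne_add (Ne.symm hij)) hc
  · intro hcon
    simp only [Finset.mem_insert, Finset.mem_singleton, Prod.ext_iff] at hcon
    rcases hcon with ⟨hc, -⟩ | ⟨hc, -⟩
    · exact (e_ne_e hij) hc
    · exact (e_ne_add hij) hc
  · intro hcon
    simp only [Finset.mem_insert, Finset.mem_singleton, Prod.ext_iff] at hcon
    rcases hcon with ⟨hc, -⟩ | ⟨hc, -⟩ | ⟨hc, -⟩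
    · exact (e_ne_zero i) hc.symm
    · exact (e_ne_zero j) hc.symm
    · exact (zero_ne_add hij) hc

lemma cL_P (n m : ℕ) (hm : 1 ≤ m) (a : ℕ+) (ha : (a:ℕ) = n + m) :
    MvPolynomial.coeff (e a) (P n m)
      = (-1:ℂ)^n * halfChoose n * ((2:ℂ)*((n+m:ℕ):ℂ))⁻¹ := by
  rw [P, MvPolynomial.coeff_sum]
  have key : ∀ k ∈ Finset.range (n+1),
      MvPolynomial.coeff (e a) (((-1 : ℂ)^k * halfChoose k) • (S (m+k) * S (n-k)))
      = if k = n then (-1:ℂ)^n * halfChoose n * ((2:ℂ)*((n+m:ℕ):ℂ))⁻¹ else 0 := by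
    intro k hk
    rw [Finset.mem_range] at hk
    rw [MvPolynomial.coeff_smul, cL_mul, c0_S, c0_S, cL_S, cL_S]
    have h1 : ¬ (m + k = 0) := by omega
    rw [if_neg h1]
    by_cases h2 : k = n
    · subst h2
      have h3 : (a:ℕ) = m + k := by omega
      have h4 : k - k = 0 := by omega
      rw [if_pos h3, if_pos h4, if_pos rfl, if_neg (by omega : ¬ (a:ℕ) = k - k)]
      have h5 : ((m+k:ℕ):ℂ) = ((k+m:ℕ):ℂ) := by rw [Nat.add_comm]
      rw [h5]
      simp only [smul_eq_mul]
      ring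
    · have h3 : ¬ ((a:ℕ) = m + k) := by omega
      have h4 : ¬ (n - k = 0) := by omega
      rw [if_neg h3, if_neg h4, if_neg h2]
      simp
  rw [Finset.sum_congr rfl key, Finset.sum_ite_eq' (Finset.range (n+1)) n
    (fun _ => (-1:ℂ)^n * halfChoose n * ((2:ℂ)*((n+m:ℕ):ℂ))⁻¹)]
  simp

lemma cQ_P (n m : ℕ) (hm : 1 ≤ m) (i j : ℕ+)
    (him : (i:ℕ) < m) (hs : (i:ℕ) + (j:ℕ) = n + m) (hij : i ≠ j) :
    MvPolynomial.coeff (e i + e j) (P n m)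
      = (if (i:ℕ) ≤ n then (-1:ℂ)^(n-(i:ℕ)) * halfChoose (n-(i:ℕ)) else 0)
          * (((2:ℂ)*((j:ℕ):ℂ))⁻¹ * ((2:ℂ)*((i:ℕ):ℂ))⁻¹)
        + (-1:ℂ)^n * halfChoose n * ((4:ℂ)*((i:ℕ):ℂ)*((j:ℕ):ℂ))⁻¹ := by
  rw [P, MvPolynomial.coeff_sum]
  have key : ∀ k ∈ Finset.range (n+1),
      MvPolynomial.coeff (e i + e j) (((-1 : ℂ)^k * halfChoose k) • (S (m+k) * S (n-k)))
      = (if k = n - (i:ℕ) ∧ (i:ℕ) ≤ n then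
            ((-1:ℂ)^k * halfChoose k) * (((2:ℂ)*((j:ℕ):ℂ))⁻¹ * ((2:ℂ)*((i:ℕ):ℂ))⁻¹) else 0)
        + (if k = n then ((-1:ℂ)^k * halfChoose k) * ((4:ℂ)*((i:ℕ):ℂ)*((j:ℕ):ℂ))⁻¹ else 0) := by
    intro k hk
    rw [Finset.mem_range] at hk
    have hipos := i.pos
    have hjpos := j.pos
    rw [MvPolynomial.coeff_smul, cQ_mul i j hij, c0_S, c0_S, cL_S, cL_S, cL_S, cL_S,
      cQ_S i j hij, cQ_S i j hij]
    have h1 : ¬ (m + k = 0) := by omega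
    have h2 : ¬ ((i:ℕ) = m + k) := by omega
    rw [if_neg h1, if_neg h2]
    simp only [zero_mul, mul_zero, zero_add, add_zero, smul_eq_mul]
    -- remaining : c_k * ((if j = m+k ..) * (if i = n-k ..) + (if i+j = m+k ..) * (if n-k = 0 ..))
    by_cases h3 : (j:ℕ) = m + k
    · have hin : (i:ℕ) ≤ n := by omega
      have hkni : k = n - (i:ℕ) := by omega
      have h4 : (i:ℕ) = n - k := by omega
      have h5 : ¬ ((i:ℕ) + (j:ℕ) = m + k) := by omega
      have h6 : ¬ (n - k = 0) := by omega
      rw [if_pos h3, if_pos h4, if_neg h5, if_neg h6]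
      rw [if_pos ⟨hkni, hin⟩, if_neg (by omega : ¬ k = n)]
      have e1 : ((m+k:ℕ):ℂ) = ((j:ℕ):ℂ) := by rw [← h3]
      have e2 : ((n-k:ℕ):ℂ) = ((i:ℕ):ℂ) := by rw [← h4]
      rw [e1, e2]
      have e3 : (-1:ℂ)^k * halfChoose k = (-1:ℂ)^(n-(i:ℕ)) * halfChoose (n-(i:ℕ)) := by
        rw [hkni]
      rw [e3]
      ring
    · rw [if_neg h3]
      have hni : ¬ (k = n - (i:ℕ) ∧ (i:ℕ) ≤ n) := by
        rintro ⟨hk', hin⟩; exact h3 (by omega)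
      rw [if_neg hni]
      by_cases h4 : k = n
      · subst h4
        have h5 : (i:ℕ) + (j:ℕ) = m + k := by omega
        have h6 : k - k = 0 := by omega
        rw [if_pos h5, if_pos h6, if_pos rfl]
        simp only [mul_one, zero_add, mul_zero]
        ring
      · have h5 : ¬ ((i:ℕ) + (j:ℕ) = m + k) := by omega
        have h6 : ¬ (n - k = 0) := by omega
        rw [if_neg h5, if_neg h6, if_neg h4]
        simp
  rw [Finset.sum_congr rfl key, Finset.sum_add_distrib]
  simp only [ite_and]
  rw [Finset.sum_ite_eq' (Finset.range (n+1)) (n - (i:ℕ))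
    (fun k => if (i:ℕ) ≤ n then ((-1:ℂ)^k * halfChoose k) * (((2:ℂ)*((j:ℕ):ℂ))⁻¹ * ((2:ℂ)*((i:ℕ):ℂ))⁻¹) else 0)]
  rw [Finset.sum_ite_eq' (Finset.range (n+1)) n
    (fun k => ((-1:ℂ)^k * halfChoose k) * ((4:ℂ)*((i:ℕ):ℂ)*((j:ℕ):ℂ))⁻¹)]
  rw [if_pos (show (n - (i:ℕ)) ∈ Finset.range (n+1) from by rw [Finset.mem_range]; omega)]
  rw [if_pos (show n ∈ Finset.range (n+1) from by rw [Finset.mem_range]; omega)]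
  by_cases hin : (i:ℕ) ≤ n
  · rw [if_pos hin, if_pos hin]
  · rw [if_neg hin, if_neg hin]; ring

lemma halfChoose_zero : halfChoose 0 = 1 := by simp [halfChoose]

lemma P_indep (N : ℕ) :
    LinearIndependent ℂ (fun n : Fin (N+1) => P (n:ℕ) (2*N+1 - (n:ℕ))) := by
  rw [Fintype.linearIndependent_iff]
  intro g hg
  set w : ℕ := 2*N+1 with hw
  have hw1 : 1 ≤ w := by omega
  set wP : ℕ+ := ⟨w, by omega⟩ with hwP
  have hwPc : (wP:ℕ) = w := rfl
  -- Equation E0 from the coefficient of x_w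
  have E0 : ∑ n : Fin (N+1), g n * ((-1:ℂ)^(n:ℕ) * halfChoose (n:ℕ)) = 0 := by
    have h0 := congrArg (MvPolynomial.coeff (e wP)) hg
    rw [MvPolynomial.coeff_sum, MvPolynomial.coeff_zero] at h0
    have h1 : ∀ n : Fin (N+1),
        MvPolynomial.coeff (e wP) (g n • P (n:ℕ) (w - (n:ℕ)))
          = g n * ((-1:ℂ)^(n:ℕ) * halfChoose (n:ℕ)) * ((2:ℂ)*(w:ℂ))⁻¹ := by
      intro n
      have hn : (n:ℕ) ≤ N := by omega
      rw [MvPolynomial.coeff_smul, cL_P (n:ℕ) (w - (n:ℕ)) (by omega) wP (by omega)]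
      have : (((n:ℕ) + (w - (n:ℕ)) : ℕ) : ℂ) = (w:ℂ) := by
        congr 1; omega
      rw [this, smul_eq_mul]
      ring
    rw [Finset.sum_congr rfl (fun n _ => h1 n)] at h0
    rw [← Finset.sum_mul] at h0
    rcases mul_eq_zero.mp h0 with h | h
    · exact h
    · exfalso
      have : ((2:ℂ)*(w:ℂ)) ≠ 0 := by
        apply mul_ne_zero two_ne_zero
        exact Nat.cast_ne_zero.mpr (by omega)
      exact this (inv_eq_zero.mp h)
  -- Equations E_i from the coefficients of x_i x_{w-i}
  have Ei : ∀ i : ℕ, 1 ≤ i → i ≤ N →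
      ∑ n : Fin (N+1), g n *
        (if i ≤ (n:ℕ) then (-1:ℂ)^((n:ℕ)-i) * halfChoose ((n:ℕ)-i) else 0) = 0 := by
    intro i hi1 hiN
    set iP : ℕ+ := ⟨i, by omega⟩ with hiP
    set jP : ℕ+ := ⟨w - i, by omega⟩ with hjP
    have hiPc : (iP:ℕ) = i := rfl
    have hjPc : (jP:ℕ) = w - i := rfl
    have hijP : iP ≠ jP := by
      intro h
      have : (iP:ℕ) = (jP:ℕ) := by rw [h]
      rw [hiPc, hjPc] at this; omega
    have hI : ((i:ℕ):ℂ) ≠ 0 := Nat.cast_ne_zero.mpr (by omega)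
    have hJ : (((w-i:ℕ)):ℂ) ≠ 0 := Nat.cast_ne_zero.mpr (by omega)
    have h0 := congrArg (MvPolynomial.coeff (e iP + e jP)) hg
    rw [MvPolynomial.coeff_sum, MvPolynomial.coeff_zero] at h0
    have h1 : ∀ n : Fin (N+1),
        MvPolynomial.coeff (e iP + e jP) (g n • P (n:ℕ) (w - (n:ℕ)))
          = g n * ((if i ≤ (n:ℕ) then (-1:ℂ)^((n:ℕ)-i) * halfChoose ((n:ℕ)-i) else 0)
              + (-1:ℂ)^(n:ℕ) * halfChoose (n:ℕ)) * ((4:ℂ)*((i:ℕ):ℂ)*(((w-i:ℕ)):ℂ))⁻¹ := by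
      intro n
      have hn : (n:ℕ) ≤ N := by omega
      rw [MvPolynomial.coeff_smul,
        cQ_P (n:ℕ) (w - (n:ℕ)) (by omega) iP jP (by rw [hiPc]; omega)
          (by rw [hiPc, hjPc]; omega) hijP]
      rw [hiPc, hjPc]
      have hinv : ((2:ℂ)*(((w-i:ℕ)):ℂ))⁻¹ * ((2:ℂ)*((i:ℕ):ℂ))⁻¹
          = ((4:ℂ)*((i:ℕ):ℂ)*(((w-i:ℕ)):ℂ))⁻¹ := by
        rw [← mul_inv]
        congr 1
        ring
      rw [hinv, smul_eq_mul]
      ring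
    rw [Finset.sum_congr rfl (fun n _ => h1 n)] at h0
    rw [← Finset.sum_mul] at h0
    rcases mul_eq_zero.mp h0 with h | h
    · have hsplit : ∑ n : Fin (N+1), g n *
          ((if i ≤ (n:ℕ) then (-1:ℂ)^((n:ℕ)-i) * halfChoose ((n:ℕ)-i) else 0)
            + (-1:ℂ)^(n:ℕ) * halfChoose (n:ℕ))
          = (∑ n : Fin (N+1), g n * (if i ≤ (n:ℕ) then (-1:ℂ)^((n:ℕ)-i) * halfChoose ((n:ℕ)-i) else 0))
            + ∑ n : Fin (N+1), g n * ((-1:ℂ)^(n:ℕ) * halfChoose (n:ℕ)) := by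
        rw [← Finset.sum_add_distrib]
        apply Finset.sum_congr rfl
        intro n _
        ring
      rw [hsplit, E0, add_zero] at h
      exact h
    · exfalso
      have : ((4:ℂ)*((i:ℕ):ℂ)*(((w-i:ℕ)):ℂ)) ≠ 0 := by
        apply mul_ne_zero (mul_ne_zero (by norm_num) hI) hJ
      exact this (inv_eq_zero.mp h)
  -- downward induction kills g n for n ≥ 1
  have hkill : ∀ d : ℕ, ∀ n : Fin (N+1), 1 ≤ (n:ℕ) → N - (n:ℕ) ≤ d → g n = 0 := by
    intro d
    induction d with
    | zero =>
      intro n hn1 hnd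
      have hnN : (n:ℕ) = N := by omega
      have h := Ei (n:ℕ) hn1 (by omega)
      rw [Finset.sum_eq_single n] at h
      · rw [if_pos (le_refl _), Nat.sub_self, pow_zero, halfChoose_zero, one_mul, mul_one] at h
        exact h
      · intro b _ hb
        have hbn : (b:ℕ) ≠ (n:ℕ) := fun hc => hb (Fin.ext hc)
        have : ¬ ((n:ℕ) ≤ (b:ℕ)) := by omega
        rw [if_neg this, mul_zero]
      · intro hc; exact absurd (Finset.mem_univ n) hc
    | succ d ih =>
      intro n hn1 hnd
      have h := Ei (n:ℕ) hn1 (by omega)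
      rw [Finset.sum_eq_single n] at h
      · rw [if_pos (le_refl _), Nat.sub_self, pow_zero, halfChoose_zero, one_mul, mul_one] at h
        exact h
      · intro b _ hb
        have hbn : (b:ℕ) ≠ (n:ℕ) := fun hc => hb (Fin.ext hc)
        by_cases hlt : (b:ℕ) < (n:ℕ)
        · rw [if_neg (by omega), mul_zero]
        · have : g b = 0 := ih b (by omega) (by omega)
          rw [this, zero_mul]
      · intro hc; exact absurd (Finset.mem_univ n) hc
  -- conclude
  intro n
  by_cases hn : 1 ≤ (n:ℕ)
  · exact hkill N n hn (by omega)
  · have hn0 : (n:ℕ) = 0 := by omega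
    have h := E0
    rw [Finset.sum_eq_single n] at h
    · rw [hn0, pow_zero, halfChoose_zero, one_mul, mul_one] at h
      exact h
    · intro b _ hb
      have hb1 : 1 ≤ (b:ℕ) := by
        rcases Nat.eq_zero_or_pos (b:ℕ) with h' | h'
        · exfalso; exact hb (Fin.ext (by omega))
        · exact h'
      rw [hkill N b hb1 (by omega), zero_mul]
    · intro hc; exact absurd (Finset.mem_univ n) hc

def wt : ℕ+ → ℕ := fun n => (n:ℕ)

lemma weight_e (a : ℕ+) (b : ℕ) : (Finsupp.weight wt) (Finsupp.single a b) = b * (a:ℕ) := by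
  rw [Finsupp.weight_apply, Finsupp.sum_single_index]
  · simp [wt, mul_comm]
  · simp

lemma S_hom : ∀ k, MvPolynomial.IsWeightedHomogeneous wt (S k) k := by
  intro k
  induction k using Nat.strong_induction_on with
  | _ k ih =>
    match k with
    | 0 =>
      have h0 : S 0 = 1 := by simp [S]
      rw [h0]
      exact MvPolynomial.isWeightedHomogeneous_one ℂ wt
    | (t+1) =>
      rw [S_succ]
      rw [← MvPolynomial.mem_weightedHomogeneousSubmodule]
      apply Submodule.smul_mem
      rw [MvPolynomial.mem_weightedHomogeneousSubmodule]
      apply MvPolynomial.IsWeightedHomogeneous.sum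
      intro j hj
      rw [Finset.mem_range] at hj
      have h1 := MvPolynomial.isWeightedHomogeneous_C (R := ℂ) wt (2⁻¹ : ℂ)
      have h2 := MvPolynomial.isWeightedHomogeneous_X ℂ wt ((t-j).succPNat)
      have h3 := ih j (by omega)
      have combined := (h1.mul h2).mul h3
      have he : 0 + wt ((t-j).succPNat) + j = t + 1 := by
        have : wt ((t-j).succPNat) = t - j + 1 := rfl
        rw [this]; omega
      exact he ▸ combined

lemma P_hom (n m : ℕ) : MvPolynomial.IsWeightedHomogeneous wt (P n m) (n+m) := by
  rw [P]
  apply MvPolynomial.IsWeightedHomogeneous.sum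
  intro k hk
  rw [Finset.mem_range] at hk
  rw [← MvPolynomial.mem_weightedHomogeneousSubmodule]
  apply Submodule.smul_mem
  rw [MvPolynomial.mem_weightedHomogeneousSubmodule]
  have combined := (S_hom (m+k)).mul (S_hom (n-k))
  have he : (m+k) + (n-k) = n + m := by omega
  exact he ▸ combined

lemma pderiv_X_hom (n : ℕ+) {p : A} {d : ℕ} (h : MvPolynomial.IsWeightedHomogeneous wt p d) :
    MvPolynomial.IsWeightedHomogeneous wt (MvPolynomial.X (n+1) * MvPolynomial.pderiv n p) (d+1) := by
  conv_lhs =>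
    rw [MvPolynomial.as_sum p]
  rw [map_sum, Finset.mul_sum]
  apply MvPolynomial.IsWeightedHomogeneous.sum
  intro m hm
  rw [MvPolynomial.pderiv_monomial]
  by_cases hmn : m n = 0
  · rw [hmn, Nat.cast_zero, mul_zero, map_zero, mul_zero]
    exact MvPolynomial.isWeightedHomogeneous_zero ℂ wt _
  · have hle : Finsupp.single n 1 ≤ m := by
      rw [Finsupp.single_le_iff]; omega
    have hwm : (Finsupp.weight wt) m = d := h (MvPolynomial.mem_support_iff.mp hm)
    have hsplit : m = (m - Finsupp.single n 1) + Finsupp.single n 1 :=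
      (tsub_add_cancel_of_le hle).symm
    have hwsub : (Finsupp.weight wt) (m - Finsupp.single n 1) + (n:ℕ) = d := by
      have := congrArg (Finsupp.weight wt) hsplit
      rw [map_add, weight_e, one_mul] at this
      omega
    have h1 := MvPolynomial.isWeightedHomogeneous_X ℂ wt (n+1)
    have h2 := MvPolynomial.isWeightedHomogeneous_monomial wt
      (m - Finsupp.single n 1) (MvPolynomial.coeff m p * m n) rfl
    have combined := h1.mul h2
    have he : wt (n+1) + (Finsupp.weight wt) (m - Finsupp.single n 1) = d + 1 := by
      have h4 : wt (n+1) = (n:ℕ) + 1 := by simp [wt]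
      omega
    exact he ▸ combined

lemma D_hom {p : A} {d : ℕ} (h : MvPolynomial.IsWeightedHomogeneous wt p d) :
    MvPolynomial.IsWeightedHomogeneous wt (D p) (d+1) := by
  rw [D]
  apply MvPolynomial.IsWeightedHomogeneous.add
  · have h1 := (MvPolynomial.isWeightedHomogeneous_X ℂ wt 1).mul h
    have he : wt 1 + d = d + 1 := by
      have : wt 1 = 1 := rfl
      omega
    exact he ▸ h1
  · apply MvPolynomial.IsWeightedHomogeneous.sum
    intro n _
    rw [← MvPolynomial.mem_weightedHomogeneousSubmodule]
    apply Submodule.smul_mem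
    rw [MvPolynomial.mem_weightedHomogeneousSubmodule]
    exact pderiv_X_hom n h

lemma D_iterate_hom (a : ℕ) {p : A} {d : ℕ} (h : MvPolynomial.IsWeightedHomogeneous wt p d) :
    MvPolynomial.IsWeightedHomogeneous wt (D^[a] p) (d+a) := by
  induction a with
  | zero => simpa using h
  | succ a ih =>
    rw [Function.iterate_succ_apply']
    have := D_hom ih
    have he : d + a + 1 = d + (a+1) := by omega
    exact he ▸ this


lemma D_eq_superset (p : A) {s : Finset ℕ+} (hs : p.vars ⊆ s) :
    D p = MvPolynomial.X 1 * p +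
      ∑ n ∈ s, ((n : ℕ) : ℂ) • (MvPolynomial.X (n + 1) * MvPolynomial.pderiv n p) := by
  rw [D]
  congr 1
  apply Finset.sum_subset hs
  intro x _ hx
  rw [MvPolynomial.pderiv_eq_zero_of_notMem_vars hx, mul_zero, smul_zero]

lemma D_add (p q : A) : D (p + q) = D p + D q := by
  classical
  have h1 : p.vars ⊆ p.vars ∪ q.vars := Finset.subset_union_left
  have h2 : q.vars ⊆ p.vars ∪ q.vars := Finset.subset_union_right
  have h3 : (p+q).vars ⊆ p.vars ∪ q.vars := MvPolynomial.vars_add_subset p q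
  rw [D_eq_superset (p+q) h3, D_eq_superset p h1, D_eq_superset q h2]
  simp only [map_add, mul_add, smul_add, Finset.sum_add_distrib]
  ring

lemma D_zero : D 0 = 0 := by
  simp [D]

lemma D_smul (c : ℂ) (p : A) : D (c • p) = c • D p := by
  by_cases hc : c = 0
  · simp [hc, D_zero]
  · have hv : (c • p).vars = p.vars := by
      rw [MvPolynomial.smul_eq_C_mul, MvPolynomial.vars_C_mul _ hc]
    rw [D, D, hv]
    rw [smul_add, Finset.smul_sum]
    congr 1
    · rw [mul_smul_comm]
    · apply Finset.sum_congr rfl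
      intro n _
      rw [Derivation.map_smul, mul_smul_comm, smul_comm]

/-- `D` as a linear map. -/
def Dl : A →ₗ[ℂ] A where
  toFun := D
  map_add' := D_add
  map_smul' := D_smul

lemma D_iterate_eq (a : ℕ) : D^[a] = ⇑(Dl^a) := by
  induction a with
  | zero => funext p; simp
  | succ a ih =>
    funext p
    rw [Function.iterate_succ_apply', ih, pow_succ']
    rfl

/-- decomposition of a polynomial into weighted homogeneous components -/
lemma decomp (f : A) :
    f = ∑ d ∈ Finset.range (MvPolynomial.weightedTotalDegree wt f + 1),
      (MvPolynomial.weightedHomogeneousComponent wt d) f := by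
  have h := MvPolynomial.sum_weightedHomogeneousComponent wt f
  rw [finsum_eq_finset_sum_of_support_subset] at h
  · exact h.symm
  · intro d hd
    simp only [Function.mem_support] at hd
    simp only [Finset.coe_range, Set.mem_Iio]
    by_contra hcon
    have hlt : MvPolynomial.weightedTotalDegree wt f < d := by omega
    exact hd (MvPolynomial.weightedHomogeneousComponent_eq_zero d f hlt)

lemma proj_mem_span (F : Finset A) (W : ℕ) {q : A}
    (hq : q ∈ Submodule.span ℂ {p : A | ∃ f ∈ F, ∃ a : ℕ, p = D^[a] f}) :
    (MvPolynomial.weightedHomogeneousComponent wt W) q ∈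
      Submodule.span ℂ ((Finset.image
        (fun x : A × ℕ => D^[W - x.2] ((MvPolynomial.weightedHomogeneousComponent wt x.2) x.1))
        (F ×ˢ Finset.range ((F.sup fun f => MvPolynomial.weightedTotalDegree wt f) + 1))
          : Finset A) : Set A) := by
  classical
  set G := (Finset.image
        (fun x : A × ℕ => D^[W - x.2] ((MvPolynomial.weightedHomogeneousComponent wt x.2) x.1))
        (F ×ˢ Finset.range ((F.sup fun f => MvPolynomial.weightedTotalDegree wt f) + 1))
          : Finset A) with hG
  have hmap : (MvPolynomial.weightedHomogeneousComponent wt W) q ∈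
      Submodule.map (MvPolynomial.weightedHomogeneousComponent (R := ℂ) wt W)
        (Submodule.span ℂ {p : A | ∃ f ∈ F, ∃ a : ℕ, p = D^[a] f}) :=
    Submodule.mem_map_of_mem hq
  rw [Submodule.map_span] at hmap
  have hsub : (MvPolynomial.weightedHomogeneousComponent (R := ℂ) wt W) ''
      {p : A | ∃ f ∈ F, ∃ a : ℕ, p = D^[a] f} ⊆ ↑(Submodule.span ℂ (G : Set A)) := by
    rintro y ⟨p, hp, rfl⟩
    obtain ⟨f, hf, a, rfl⟩ := hp
    rw [D_iterate_eq]
    nth_rewrite 1 [decomp f]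
    rw [map_sum, map_sum]
    apply Submodule.sum_mem
    intro d hd
    rw [Finset.mem_range] at hd
    have hhom : MvPolynomial.IsWeightedHomogeneous wt
        ((Dl^a) ((MvPolynomial.weightedHomogeneousComponent wt d) f)) (d + a) := by
      have h1 := D_iterate_hom a
        (MvPolynomial.weightedHomogeneousComponent_isWeightedHomogeneous
          (w := wt) d f)
      rw [D_iterate_eq] at h1
      exact h1
    by_cases hW : d + a = W
    · have heq := MvPolynomial.IsWeightedHomogeneous.weightedHomogeneousComponent_same
        (hW ▸ hhom)
      rw [heq]
      apply Submodule.subset_span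
      rw [hG]
      simp only [Finset.coe_image, Set.mem_image, Finset.mem_coe, Finset.mem_product,
        Finset.mem_range]
      refine ⟨(f, d), ⟨hf, ?_⟩, ?_⟩
      · have hDm : MvPolynomial.weightedTotalDegree wt f ≤
            F.sup fun f => MvPolynomial.weightedTotalDegree wt f := Finset.le_sup hf
        omega
      · simp only
        rw [show W - d = a by omega, D_iterate_eq]
    · have heq := MvPolynomial.IsWeightedHomogeneous.weightedHomogeneousComponent_ne W
        hhom (fun h => hW h.symm)
      rw [heq]
      exact Submodule.zero_mem _
  exact Submodule.span_le.mpr hsub hmap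


end

/-- There is no finite subset `F` of `A` such that the family `{D^a(f) : f ∈ F, a ≥ 0}`
spans the subspace `span_ℂ{P_{n,m} : m ≥ n ≥ 0}` of `A`. -/
theorem no_finite_D_generating_set :
    ¬ ∃ F : Finset A,
        Submodule.span ℂ {p : A | ∃ f ∈ F, ∃ a : ℕ, p = D^[a] f} =
          Submodule.span ℂ {p : A | ∃ n m : ℕ, n ≤ m ∧ p = P n m} := by
  classical
  rintro ⟨F, hF⟩
  set Dm := F.sup (fun f => MvPolynomial.weightedTotalDegree wt f) with hDm
  set N := F.card * (Dm + 1) with hN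
  set W := 2*N+1 with hWdef
  set G := (Finset.image
        (fun x : A × ℕ => D^[W - x.2] ((MvPolynomial.weightedHomogeneousComponent wt x.2) x.1))
        (F ×ˢ Finset.range (Dm + 1)) : Finset A) with hG
  have hcard : G.card ≤ N := by
    calc G.card ≤ (F ×ˢ Finset.range (Dm + 1)).card := Finset.card_image_le
    _ = N := by rw [Finset.card_product, Finset.card_range]
  have hmem : ∀ n : Fin (N+1), P (n:ℕ) (2*N+1 - (n:ℕ)) ∈ Submodule.span ℂ (G : Set A) := by
    intro n
    have hn : (n:ℕ) ≤ N := by omega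
    have h1 : P (n:ℕ) (W - (n:ℕ)) ∈
        Submodule.span ℂ {p : A | ∃ n m : ℕ, n ≤ m ∧ p = P n m} :=
      Submodule.subset_span ⟨(n:ℕ), W - (n:ℕ), by omega, rfl⟩
    rw [← hF] at h1
    have h2 := proj_mem_span F W h1
    have h3 : (MvPolynomial.weightedHomogeneousComponent wt W) (P (n:ℕ) (W - (n:ℕ)))
        = P (n:ℕ) (W - (n:ℕ)) := by
      apply MvPolynomial.IsWeightedHomogeneous.weightedHomogeneousComponent_same
      have hph := P_hom (n:ℕ) (W - (n:ℕ))
      have he : (n:ℕ) + (W - (n:ℕ)) = W := by omega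
      rw [he] at hph
      exact hph
    rw [h3] at h2
    exact h2
  have hli := P_indep N
  have hrange : Set.range (fun n : Fin (N+1) => P (n:ℕ) (2*N+1 - (n:ℕ))) ≤
      Submodule.span ℂ ((G : Finset A) : Set A) := by
    rintro y ⟨n, rfl⟩
    exact hmem n
  have hcardle := linearIndependent_le_span' _ hli ((G : Finset A) : Set A) hrange
  rw [Cardinal.mk_fintype, Fintype.card_fin] at hcardle
  have hfin : (N+1 : ℕ) ≤ Fintype.card ((G : Set A) : Type) := by exact_mod_cast hcardle
  simp only [Finset.coe_sort_coe, Fintype.card_coe] at hfin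
  omega
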